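/- With the subdivision setup below, for n ≥ 2, (1/#S) Σ_{σ∈S} Σ_{i=1}^{e'} ‖μ(X^σ_i) − μ(X')‖² = e'·(Rg²(M') + ‖μ(X', deg) − μ(X')‖²) + (n²(n+1)/(12(n−1)²)) Σ_{i=1}^{e'} Rg²(W_i), where M' is the point cloud of edge midpoints m'_i = (X'(head i) + X'(tail i))/2 with unit weights, μ(X', deg) is the degree-weighted center of mass of X' with deg(k) = #{i : head i = k} + #{i : tail i = k} (assumed positive for every k), μ(X') is the unit-weight center of mass of the junction positions, and W_i = (w(i,1),…,w(i,n)) is a point cloud with unit weights. -/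

import Mathlib

open Finset

/-- Center of mass of a weighted point cloud. -/
noncomputable def com {V : Type*} [Fintype V] {d : ℕ}
    (X : V → EuclideanSpace ℝ (Fin d)) (Ω : V → ℝ) : EuclideanSpace ℝ (Fin d) :=
  (∑ v, Ω v)⁻¹ • ∑ v, Ω v • X v

/-- Weighted squared radius of gyration of a point cloud. -/
noncomputable def rg2 {V : Type*} [Fintype V] {d : ℕ}
    (X : V → EuclideanSpace ℝ (Fin d)) (Ω : V → ℝ) : ℝ :=
  (∑ v, Ω v)⁻¹ * ∑ v, Ω v * ‖X v - com X Ω‖ ^ 2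

/-- Center of mass with unit weights. -/
noncomputable def uMu {V : Type*} [Fintype V] {d : ℕ}
    (X : V → EuclideanSpace ℝ (Fin d)) : EuclideanSpace ℝ (Fin d) :=
  (Fintype.card V : ℝ)⁻¹ • ∑ v, X v

/-- Squared radius of gyration with unit weights. -/
noncomputable def uRg2 {V : Type*} [Fintype V] {d : ℕ}
    (X : V → EuclideanSpace ℝ (Fin d)) : ℝ :=
  (Fintype.card V : ℝ)⁻¹ * ∑ v, ‖X v - uMu X‖ ^ 2

/-- Position of the `j`-th intermediate vertex (1-indexed position `j+1`) on the
subdivided edge `i`, for the permuted displacement vectors: `x^σ_{i,j}` equals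
`X'(tail i)` plus the first `j+1` permuted displacements. -/
noncomputable def xpos {d n v' e' : ℕ}
    (X' : Fin v' → EuclideanSpace ℝ (Fin d)) (tl : Fin e' → Fin v')
    (w : Fin e' → Fin n → EuclideanSpace ℝ (Fin d))
    (σ : Fin e' → Equiv.Perm (Fin n)) (i : Fin e') (j : Fin (n - 1)) :
    EuclideanSpace ℝ (Fin d) :=
  X' (tl i) + ∑ k : Fin n, if (k : ℕ) ≤ (j : ℕ) then w i (σ i k) else 0

/-! ### Auxiliary lemmas -/

section Aux

variable {n d : ℕ}

lemma avg_pi_eval {ι G : Type*} [Fintype ι] [DecidableEq ι] [Fintype G] [Nonempty G]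
    (i : ι) (f : G → ℝ) :
    (Fintype.card (ι → G) : ℝ)⁻¹ * ∑ σ : ι → G, f (σ i)
      = (Fintype.card G : ℝ)⁻¹ * ∑ g, f g := by
  classical
  set e := Equiv.piSplitAt i (fun _ : ι => G) with he
  have h1 : ∑ σ : ι → G, f (σ i) = ∑ p : G × ({j : ι // j ≠ i} → G), f p.1 :=
    Fintype.sum_equiv e _ _ (fun σ => by rw [he]; rfl)
  have h2 : ∑ p : G × ({j : ι // j ≠ i} → G), f p.1
      = (Fintype.card ({j : ι // j ≠ i} → G) : ℝ) * ∑ g, f g := by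
    rw [Fintype.sum_prod_type]
    simp [Finset.sum_const, Finset.mul_sum, card_univ]
  have h3 : (Fintype.card (ι → G) : ℝ)
      = (Fintype.card G : ℝ) * (Fintype.card ({j : ι // j ≠ i} → G) : ℝ) := by
    rw [← Nat.cast_mul, ← Fintype.card_prod]
    exact_mod_cast congrArg (Nat.cast (R := ℝ)) (Fintype.card_congr e)
  have hB : (Fintype.card ({j : ι // j ≠ i} → G) : ℝ) ≠ 0 := by
    exact_mod_cast Fintype.card_ne_zero
  have hG : (Fintype.card G : ℝ) ≠ 0 := by exact_mod_cast Fintype.card_ne_zero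
  rw [h1, h2, h3]
  field_simp

lemma sum_perm_mul {α : Type*} [AddCommMonoid α] (F : Equiv.Perm (Fin n) → α)
    (ρ : Equiv.Perm (Fin n)) :
    ∑ π : Equiv.Perm (Fin n), F (π * ρ) = ∑ π, F π :=
  Fintype.sum_equiv (Equiv.mulRight ρ) _ _ (fun _ => rfl)

lemma sum_perm_apply_const {α : Type*} [AddCommMonoid α] (F : Fin n → α) (k k' : Fin n) :
    ∑ π : Equiv.Perm (Fin n), F (π k) = ∑ π : Equiv.Perm (Fin n), F (π k') := by
  have h := sum_perm_mul (fun π : Equiv.Perm (Fin n) => F (π k')) (Equiv.swap k' k)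
  simpa [Equiv.Perm.mul_apply, Equiv.swap_apply_left] using h

lemma sum_perm_single (hn : 1 ≤ n) (u : Fin n → EuclideanSpace ℝ (Fin d))
    (hu : ∑ m, u m = 0) (k : Fin n) :
    ∑ π : Equiv.Perm (Fin n), u (π k) = 0 := by
  have hsum : ∑ k' : Fin n, ∑ π : Equiv.Perm (Fin n), u (π k') = 0 := by
    rw [Finset.sum_comm]
    have : ∀ π : Equiv.Perm (Fin n), ∑ k' : Fin n, u (π k') = 0 := fun π => by
      rw [Equiv.sum_comp π u]; exact hu
    simp [this]
  have hc : ∑ k' : Fin n, ∑ π : Equiv.Perm (Fin n), u (π k')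
      = (n : ℝ) • ∑ π : Equiv.Perm (Fin n), u (π k) := by
    rw [Finset.sum_congr rfl (fun k' _ => sum_perm_apply_const u k' k), Finset.sum_const,
      card_univ, Fintype.card_fin, Nat.cast_smul_eq_nsmul ℝ]
  rw [hc] at hsum
  have hn0 : (n : ℝ) ≠ 0 := by positivity
  exact (smul_eq_zero.mp hsum).resolve_left hn0

lemma sum_perm_pair_offdiag (G : Fin n → Fin n → ℝ) {k l k' l' : Fin n}
    (hkl : k ≠ l) (hkl' : k' ≠ l') :
    ∑ π : Equiv.Perm (Fin n), G (π k) (π l) = ∑ π : Equiv.Perm (Fin n), G (π k') (π l') := by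
  have ha : Equiv.swap k k' l ≠ k' := by
    rcases eq_or_ne l k' with rfl | h
    · simpa [Equiv.swap_apply_right] using hkl
    · rwa [Equiv.swap_apply_of_ne_of_ne hkl.symm h]
  set ρ : Equiv.Perm (Fin n) := Equiv.swap (Equiv.swap k k' l) l' * Equiv.swap k k' with hρ
  have hρk : ρ k = k' := by
    rw [hρ, Equiv.Perm.mul_apply, Equiv.swap_apply_left]
    exact Equiv.swap_apply_of_ne_of_ne (Ne.symm ha) hkl'
  have hρl : ρ l = l' := by
    rw [hρ, Equiv.Perm.mul_apply, Equiv.swap_apply_left]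
  have h := sum_perm_mul (fun π : Equiv.Perm (Fin n) => G (π k) (π l)) ρ
  rw [← h]
  refine Finset.sum_congr rfl (fun π _ => ?_)
  simp only [Equiv.Perm.mul_apply, hρk, hρl]

lemma perm_avg (hn : 2 ≤ n) (u : Fin n → EuclideanSpace ℝ (Fin d))
    (hu : ∑ m, u m = 0) (b : EuclideanSpace ℝ (Fin d)) (a : Fin n → ℝ) :
    (Fintype.card (Equiv.Perm (Fin n)) : ℝ)⁻¹ *
        ∑ π : Equiv.Perm (Fin n), ‖b + ∑ k, a k • u (π k)‖ ^ 2
      = ‖b‖ ^ 2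
        + ((∑ k, a k ^ 2) - ((∑ k, a k) ^ 2 - ∑ k, a k ^ 2) / ((n : ℝ) - 1))
            * ((n : ℝ)⁻¹ * ∑ m, ‖u m‖ ^ 2) := by
  classical
  set N : ℝ := (Fintype.card (Equiv.Perm (Fin n)) : ℝ) with hN
  have hN0 : N ≠ 0 := by
    rw [hN]; exact_mod_cast Fintype.card_ne_zero
  have hn0 : (n : ℝ) ≠ 0 := by positivity
  have hn1 : (n : ℝ) - 1 ≠ 0 := by
    have : (2 : ℝ) ≤ (n : ℝ) := by exact_mod_cast hn
    nlinarith
  set Dg : ℝ := ∑ m, ‖u m‖ ^ 2 with hDg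
  set T : Fin n → Fin n → ℝ :=
    fun k l => ∑ π : Equiv.Perm (Fin n), inner ℝ (u (π k)) (u (π l)) with hT
  -- diagonal value
  have hdiag : ∀ k, T k k = N * Dg / n := by
    have hconst : ∀ k k' : Fin n, T k k = T k' k' := fun k k' =>
      sum_perm_apply_const (fun m => (inner ℝ (u m) (u m) : ℝ)) k k'
    have hsum : ∑ k, T k k = N * Dg := by
      rw [hT]
      simp only
      rw [Finset.sum_comm]
      have : ∀ π : Equiv.Perm (Fin n),
          (∑ k, (inner ℝ (u (π k)) (u (π k)) : ℝ)) = Dg := fun π => by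
        rw [Equiv.sum_comp π (fun m => (inner ℝ (u m) (u m) : ℝ)), hDg]
        exact Finset.sum_congr rfl (fun m _ => real_inner_self_eq_norm_sq _)
      rw [Finset.sum_congr rfl (fun π _ => this π), Finset.sum_const, card_univ]
      simp [hN, nsmul_eq_mul]
    intro k
    have h2 : ∑ k', T k' k' = (n : ℝ) * T k k := by
      rw [Finset.sum_congr rfl (fun k' _ => hconst k' k), Finset.sum_const, card_univ,
        Fintype.card_fin, nsmul_eq_mul]
    field_simp
    linear_combination hsum - h2
  -- off-diagonal value
  have h01 : (⟨0, by omega⟩ : Fin n) ≠ (⟨1, by omega⟩ : Fin n) := by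
    simp [Fin.ext_iff]
  set t : ℝ := T ⟨0, by omega⟩ ⟨1, by omega⟩ with ht
  have hoff : ∀ k l, k ≠ l → T k l = t := fun k l hkl =>
    sum_perm_pair_offdiag (fun m p => (inner ℝ (u m) (u p) : ℝ)) hkl h01
  have htot : ∑ k, ∑ l, T k l = 0 := by
    have hπ : ∀ π : Equiv.Perm (Fin n),
        ∑ k, ∑ l, (inner ℝ (u (π k)) (u (π l)) : ℝ) = 0 := by
      intro π
      have h : ∑ k, ∑ l, (inner ℝ (u (π k)) (u (π l)) : ℝ)
          = inner ℝ (∑ k, u (π k)) (∑ l, u (π l)) := by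
        rw [sum_inner]
        exact Finset.sum_congr rfl fun k _ => (inner_sum _ _ _).symm
      rw [h, Equiv.sum_comp π u, hu, inner_zero_left]
    calc ∑ k, ∑ l, T k l
        = ∑ k : Fin n, ∑ π : Equiv.Perm (Fin n), ∑ l, (inner ℝ (u (π k)) (u (π l)) : ℝ) :=
          Finset.sum_congr rfl fun k _ => Finset.sum_comm
      _ = ∑ π : Equiv.Perm (Fin n), ∑ k, ∑ l, (inner ℝ (u (π k)) (u (π l)) : ℝ) :=
          Finset.sum_comm
      _ = 0 := Finset.sum_eq_zero fun π _ => hπ π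
  -- split diagonal / off-diagonal
  have hsplit : ∑ k, ∑ l, T k l = N * Dg + (n : ℝ) * ((n : ℝ) - 1) * t := by
    have hrow : ∀ k : Fin n, ∑ l, T k l = N * Dg / n + ((n : ℝ) - 1) * t := by
      intro k
      rw [← Finset.add_sum_erase _ _ (Finset.mem_univ k), hdiag k]
      congr 1
      rw [Finset.sum_congr rfl (fun l hl => hoff k l (Finset.ne_of_mem_erase hl).symm),
        Finset.sum_const, nsmul_eq_mul, Finset.card_erase_of_mem (Finset.mem_univ k),
        card_univ, Fintype.card_fin]
      have : ((n - 1 : ℕ) : ℝ) = (n : ℝ) - 1 := by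
        have : 1 ≤ n := by omega
        push_cast [this]; ring
      rw [this]
    rw [Finset.sum_congr rfl fun k _ => hrow k, Finset.sum_const, card_univ, Fintype.card_fin,
      nsmul_eq_mul]
    field_simp
  have htval : (n : ℝ) * ((n : ℝ) - 1) * t = -(N * Dg) := by
    rw [hsplit] at htot; linarith
  -- cross term vanishes
  have hterm2 : ∀ k : Fin n, ∑ π : Equiv.Perm (Fin n), (inner ℝ b (u (π k)) : ℝ) = 0 := by
    intro k
    rw [← inner_sum, sum_perm_single (by omega) u hu k, inner_zero_right]
  -- expansion
  have h1 : ∀ π : Equiv.Perm (Fin n), ‖b + ∑ k, a k • u (π k)‖ ^ 2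
      = ‖b‖ ^ 2 + 2 * (∑ k, a k * (inner ℝ b (u (π k)) : ℝ))
        + ∑ k, ∑ l, a k * a l * (inner ℝ (u (π k)) (u (π l)) : ℝ) := by
    intro π
    rw [norm_add_sq_real]
    congr 1
    · congr 2
      rw [inner_sum]
      exact Finset.sum_congr rfl fun k _ => real_inner_smul_right _ _ _
    · rw [← real_inner_self_eq_norm_sq, sum_inner]
      refine Finset.sum_congr rfl fun k _ => ?_
      rw [real_inner_smul_left, inner_sum, Finset.mul_sum]
      refine Finset.sum_congr rfl fun l _ => ?_
      rw [real_inner_smul_right]; ring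
  have h2 : ∑ π : Equiv.Perm (Fin n), 2 * (∑ k, a k * (inner ℝ b (u (π k)) : ℝ)) = 0 := by
    have hk : ∀ k : Fin n, ∑ π : Equiv.Perm (Fin n), a k * (inner ℝ b (u (π k)) : ℝ) = 0 :=
      fun k => by rw [← Finset.mul_sum, hterm2 k, mul_zero]
    rw [← Finset.mul_sum, Finset.sum_comm, Finset.sum_eq_zero fun k _ => hk k, mul_zero]
  have h3 : ∑ π : Equiv.Perm (Fin n), ∑ k, ∑ l, a k * a l * (inner ℝ (u (π k)) (u (π l)) : ℝ)
      = ∑ k, ∑ l, a k * a l * T k l := by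
    rw [Finset.sum_comm]
    refine Finset.sum_congr rfl fun k _ => ?_
    rw [Finset.sum_comm]
    refine Finset.sum_congr rfl fun l _ => ?_
    rw [hT]
    simp only
    rw [← Finset.mul_sum]
  have h4 : ∑ k, ∑ l, a k * a l * T k l
      = (∑ k, a k ^ 2) * (N * Dg / n) + ((∑ k, a k) ^ 2 - ∑ k, a k ^ 2) * t := by
    have hrow : ∀ k : Fin n, ∑ l, a k * a l * T k l
        = a k ^ 2 * (N * Dg / n) + a k * ((∑ l, a l) - a k) * t := by
      intro k
      rw [← Finset.add_sum_erase _ _ (Finset.mem_univ k), hdiag k]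
      have hoffsum : ∑ l ∈ Finset.univ.erase k, a k * a l * T k l
          = a k * ((∑ l, a l) - a k) * t := by
        calc ∑ l ∈ Finset.univ.erase k, a k * a l * T k l
            = ∑ l ∈ Finset.univ.erase k, (a k * t) * a l :=
              Finset.sum_congr rfl fun l hl => by
                rw [hoff k l (Finset.ne_of_mem_erase hl).symm]; ring
          _ = (a k * t) * ∑ l ∈ Finset.univ.erase k, a l := (Finset.mul_sum _ _ _).symm
          _ = a k * ((∑ l, a l) - a k) * t := by
              rw [Finset.sum_erase_eq_sub (Finset.mem_univ k)]; ring
      rw [hoffsum]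
      ring
    rw [Finset.sum_congr rfl fun k _ => hrow k, Finset.sum_add_distrib, ← Finset.sum_mul]
    congr 1
    rw [← Finset.sum_mul]
    congr 1
    calc ∑ k, a k * ((∑ l, a l) - a k) = ∑ k, (a k * (∑ l, a l) - a k ^ 2) :=
          Finset.sum_congr rfl fun k _ => by ring
      _ = (∑ k, a k * (∑ l, a l)) - ∑ k, a k ^ 2 := Finset.sum_sub_distrib _ _
      _ = (∑ k, a k) ^ 2 - ∑ k, a k ^ 2 := by rw [← Finset.sum_mul]; ring
  have hexp : ∑ π : Equiv.Perm (Fin n), ‖b + ∑ k, a k • u (π k)‖ ^ 2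
      = N * ‖b‖ ^ 2 + ((∑ k, a k ^ 2) * (N * Dg / n)
          + ((∑ k, a k) ^ 2 - ∑ k, a k ^ 2) * t) := by
    rw [Finset.sum_congr rfl fun π _ => h1 π, Finset.sum_add_distrib, Finset.sum_add_distrib,
      h2, h3, h4, Finset.sum_const, card_univ, nsmul_eq_mul, add_zero, hN]
  rw [hexp]
  have ht' : t = -(N * Dg) / ((n : ℝ) * ((n : ℝ) - 1)) := by
    field_simp
    linarith [htval]
  rw [ht']
  field_simp
  ring

lemma sum_range_cast (m : ℕ) : (∑ j ∈ range m, (j : ℝ)) = m * (m - 1) / 2 := by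
  induction m with
  | zero => simp
  | succ p ih => rw [Finset.sum_range_succ, ih]; push_cast; ring

lemma sum_range_sq_cast (m : ℕ) :
    (∑ j ∈ range m, (j : ℝ) ^ 2) = m * (m - 1) * (2 * m - 1) / 6 := by
  induction m with
  | zero => simp
  | succ p ih => rw [Finset.sum_range_succ, ih]; push_cast; ring

lemma sum_coeff (n : ℕ) :
    (∑ k : Fin n, ((n - 1 - (k : ℕ) : ℕ) : ℝ)) = n * ((n : ℝ) - 1) / 2 ∧
    (∑ k : Fin n, ((n - 1 - (k : ℕ) : ℕ) : ℝ) ^ 2)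
      = n * ((n : ℝ) - 1) * (2 * n - 1) / 6 := by
  rcases Nat.eq_zero_or_pos n with rfl | hn
  · simp
  constructor
  · rw [Fin.sum_univ_eq_sum_range (fun j => ((n - 1 - j : ℕ) : ℝ)) n,
      Finset.sum_range_reflect (fun j => ((j : ℕ) : ℝ)) n, sum_range_cast]
  · rw [Fin.sum_univ_eq_sum_range (fun j => ((n - 1 - j : ℕ) : ℝ) ^ 2) n,
      Finset.sum_range_reflect (fun j => ((j : ℕ) : ℝ) ^ 2) n, sum_range_sq_cast]

lemma uMu_xpos {d n v' e' : ℕ} (hn : 2 ≤ n)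
    (X' : Fin v' → EuclideanSpace ℝ (Fin d)) (tl : Fin e' → Fin v')
    (w : Fin e' → Fin n → EuclideanSpace ℝ (Fin d))
    (σ : Fin e' → Equiv.Perm (Fin n)) (i : Fin e') :
    uMu (fun j : Fin (n - 1) => xpos X' tl w σ i j)
      = X' (tl i) + ∑ k : Fin n,
          (((n - 1 - (k : ℕ) : ℕ) : ℝ) / ((n : ℝ) - 1)) • w i (σ i k) := by
  have hc : ((n - 1 : ℕ) : ℝ) = (n : ℝ) - 1 := by
    have h1 : 1 ≤ n := by omega
    push_cast [h1]; ring
  have hc0 : ((n - 1 : ℕ) : ℝ) ≠ 0 := by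
    rw [hc]
    have : (2 : ℝ) ≤ (n : ℝ) := by exact_mod_cast hn
    nlinarith
  have hcount : ∀ k : Fin n, (∑ j : Fin (n - 1),
      if (k : ℕ) ≤ (j : ℕ) then w i (σ i k) else 0) = (n - 1 - (k : ℕ)) • w i (σ i k) := by
    intro k
    rw [Fin.sum_univ_eq_sum_range (fun j => if (k : ℕ) ≤ j then w i (σ i k) else 0) (n - 1),
      ← Finset.sum_filter]
    have hfil : (Finset.range (n - 1)).filter (fun j => (k : ℕ) ≤ j)
        = Finset.Ico (k : ℕ) (n - 1) := by
      ext j; simp [Finset.mem_Ico, Finset.mem_range, and_comm]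
    rw [hfil, Finset.sum_const, Nat.card_Ico]
  have hsum : ∑ j : Fin (n - 1), xpos X' tl w σ i j
      = (n - 1) • X' (tl i) + ∑ k : Fin n, (n - 1 - (k : ℕ)) • w i (σ i k) := by
    unfold xpos
    rw [Finset.sum_add_distrib, Finset.sum_const, card_univ, Fintype.card_fin,
      Finset.sum_comm]
    congr 1
    exact Finset.sum_congr rfl fun k _ => hcount k
  unfold uMu
  rw [Fintype.card_fin, hsum, smul_add]
  congr 1
  · rw [← Nat.cast_smul_eq_nsmul ℝ, smul_smul, inv_mul_cancel₀ hc0, one_smul]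
  · rw [Finset.smul_sum]
    refine Finset.sum_congr rfl fun k _ => ?_
    rw [← Nat.cast_smul_eq_nsmul ℝ, smul_smul, hc]
    congr 1
    field_simp

lemma var_decomp {d m : ℕ} (hm : 1 ≤ m) (x : Fin m → EuclideanSpace ℝ (Fin d))
    (A : EuclideanSpace ℝ (Fin d)) :
    ∑ i, ‖x i - A‖ ^ 2 = (m : ℝ) * uRg2 x + (m : ℝ) * ‖uMu x - A‖ ^ 2 := by
  have hm0 : (m : ℝ) ≠ 0 := by positivity
  have hsum0 : ∑ i, (x i - uMu x) = 0 := by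
    rw [Finset.sum_sub_distrib, Finset.sum_const, card_univ, Fintype.card_fin]
    unfold uMu
    rw [Fintype.card_fin, ← Nat.cast_smul_eq_nsmul ℝ, smul_smul, mul_inv_cancel₀ hm0,
      one_smul, sub_self]
  have hexp : ∀ i, ‖x i - A‖ ^ 2
      = ‖x i - uMu x‖ ^ 2 + 2 * (inner ℝ (x i - uMu x) (uMu x - A) : ℝ) + ‖uMu x - A‖ ^ 2 :=
    fun i => by rw [show x i - A = (x i - uMu x) + (uMu x - A) by abel, norm_add_sq_real]
  rw [Finset.sum_congr rfl fun i _ => hexp i, Finset.sum_add_distrib, Finset.sum_add_distrib]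
  have hcross : ∑ i, 2 * (inner ℝ (x i - uMu x) (uMu x - A) : ℝ) = 0 := by
    rw [← Finset.mul_sum, ← sum_inner, hsum0, inner_zero_left, mul_zero]
  rw [hcross, add_zero, Finset.sum_const, card_univ, Fintype.card_fin, nsmul_eq_mul]
  unfold uRg2
  rw [Fintype.card_fin]
  field_simp

lemma com_deg_eq {d v' e' : ℕ} (he' : 1 ≤ e') (head tl : Fin e' → Fin v')
    (X' : Fin v' → EuclideanSpace ℝ (Fin d)) :
    com X' (fun k => (((univ.filter fun i => head i = k).card : ℝ)
        + ((univ.filter fun i => tl i = k).card : ℝ)))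
      = uMu (fun i : Fin e' => (2 : ℝ)⁻¹ • (X' (head i) + X' (tl i))) := by
  classical
  have he0 : (e' : ℝ) ≠ 0 := by positivity
  have hfib : ∀ g : Fin e' → Fin v',
      ∑ k : Fin v', ((univ.filter fun i => g i = k).card : ℝ) • X' k = ∑ i, X' (g i) := by
    intro g
    rw [← Finset.sum_fiberwise univ g (fun i => X' (g i))]
    refine Finset.sum_congr rfl fun k _ => ?_
    rw [Finset.sum_congr rfl (fun i hi => by
      rw [(Finset.mem_filter.mp hi).2]), Finset.sum_const, ← Nat.cast_smul_eq_nsmul ℝ]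
  have hcard : ∀ g : Fin e' → Fin v',
      (∑ k : Fin v', ((univ.filter fun i => g i = k).card : ℝ)) = (e' : ℝ) := by
    intro g
    rw [← Nat.cast_sum]
    norm_cast
    rw [← Finset.card_eq_sum_card_fiberwise (fun i _ => Finset.mem_univ (g i)), card_univ,
      Fintype.card_fin]
  unfold com uMu
  rw [Fintype.card_fin]
  have h1 : (∑ k : Fin v', (((univ.filter fun i => head i = k).card : ℝ)
      + ((univ.filter fun i => tl i = k).card : ℝ))) = 2 * e' := by
    rw [Finset.sum_add_distrib, hcard head, hcard tl]; ring
  have h2 : (∑ k : Fin v', ((((univ.filter fun i => head i = k).card : ℝ)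
      + ((univ.filter fun i => tl i = k).card : ℝ)) • X' k))
      = ∑ i, X' (head i) + ∑ i, X' (tl i) := by
    rw [Finset.sum_congr rfl (fun k _ => add_smul _ _ _), Finset.sum_add_distrib,
      hfib head, hfib tl]
  rw [h1, h2]
  have h3 : ∑ i : Fin e', (2 : ℝ)⁻¹ • (X' (head i) + X' (tl i))
      = (2 : ℝ)⁻¹ • (∑ i, X' (head i) + ∑ i, X' (tl i)) := by
    rw [← Finset.smul_sum, Finset.sum_add_distrib]
  rw [h3, smul_smul]
  congr 1
  field_simp

end Aux

/-- Symmetrized fourth term: the average over `σ ∈ S` of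
`Σᵢ ‖μ(X^σ_i) − μ(X')‖²` equals
`e'·(Rg²(M') + ‖μ(X',deg) − μ(X')‖²) + (n²(n+1)/(12(n−1)²))·Σᵢ Rg²(Wᵢ)`,
where `M'` is the cloud of edge midpoints and `deg` is the vertex-degree weighting. -/
theorem average_sq_dist_to_junction_mean {d n v' e' : ℕ}
    (hd : 1 ≤ d) (hn : 2 ≤ n) (hv' : 1 ≤ v') (he' : 1 ≤ e')
    (head tl : Fin e' → Fin v')
    (X' : Fin v' → EuclideanSpace ℝ (Fin d))
    (w : Fin e' → Fin n → EuclideanSpace ℝ (Fin d))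
    (hw : ∀ i, ∑ j, w i j = X' (head i) - X' (tl i))
    (hdeg : ∀ k : Fin v',
      0 < (univ.filter fun i => head i = k).card + (univ.filter fun i => tl i = k).card) :
    (Fintype.card (Fin e' → Equiv.Perm (Fin n)) : ℝ)⁻¹ *
        ∑ σ : Fin e' → Equiv.Perm (Fin n), ∑ i : Fin e',
          ‖uMu (fun j : Fin (n - 1) => xpos X' tl w σ i j) - uMu X'‖ ^ 2
      = (e' : ℝ) *
          (uRg2 (fun i : Fin e' => (2 : ℝ)⁻¹ • (X' (head i) + X' (tl i)))
            + ‖com X' (fun k =>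
                  (((univ.filter fun i => head i = k).card : ℝ)
                    + ((univ.filter fun i => tl i = k).card : ℝ))) - uMu X'‖ ^ 2)
        + ((n : ℝ) ^ 2 * ((n : ℝ) + 1) / (12 * ((n : ℝ) - 1) ^ 2)) *
            ∑ i : Fin e', uRg2 (w i) := by
  classical
  have hn0 : (n : ℝ) ≠ 0 := by positivity
  have hn2 : (2 : ℝ) ≤ (n : ℝ) := by exact_mod_cast hn
  have hn1 : (n : ℝ) - 1 ≠ 0 := by nlinarith
  -- coefficient function
  set a : Fin n → ℝ := fun k => ((n - 1 - (k : ℕ) : ℕ) : ℝ) / ((n : ℝ) - 1) with ha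
  obtain ⟨hS1, hS2⟩ := sum_coeff n
  have hSa : ∑ k, a k = (n : ℝ) / 2 := by
    rw [ha]
    simp only
    rw [← Finset.sum_div, hS1]
    field_simp
  have hSa2 : ∑ k, a k ^ 2 = (n : ℝ) * (2 * n - 1) / (6 * ((n : ℝ) - 1)) := by
    rw [ha]
    simp only
    have hq : ∀ k : Fin n, (((n - 1 - (k : ℕ) : ℕ) : ℝ) / ((n : ℝ) - 1)) ^ 2
        = ((n - 1 - (k : ℕ) : ℕ) : ℝ) ^ 2 / ((n : ℝ) - 1) ^ 2 := fun k => div_pow _ _ 2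
    rw [Finset.sum_congr rfl fun k _ => hq k, ← Finset.sum_div, hS2]
    field_simp
  -- centered displacements
  have hu0 : ∀ i : Fin e', ∑ k, (w i k - uMu (w i)) = 0 := by
    intro i
    rw [Finset.sum_sub_distrib, Finset.sum_const, card_univ, Fintype.card_fin]
    unfold uMu
    rw [Fintype.card_fin, ← Nat.cast_smul_eq_nsmul ℝ, smul_smul, mul_inv_cancel₀ hn0,
      one_smul, sub_self]
  have hμw : ∀ i, uMu (w i) = (n : ℝ)⁻¹ • (X' (head i) - X' (tl i)) := by
    intro i
    unfold uMu
    rw [Fintype.card_fin, hw i]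
  -- per-configuration rewrite of the mean
  have hmean : ∀ (σ : Fin e' → Equiv.Perm (Fin n)) (i : Fin e'),
      uMu (fun j : Fin (n - 1) => xpos X' tl w σ i j) - uMu X'
        = ((2 : ℝ)⁻¹ • (X' (head i) + X' (tl i)) - uMu X')
          + ∑ k, a k • (w i ((σ i) k) - uMu (w i)) := by
    intro σ i
    rw [uMu_xpos hn X' tl w σ i]
    have hsplit : ∑ k : Fin n,
        (((n - 1 - (k : ℕ) : ℕ) : ℝ) / ((n : ℝ) - 1)) • w i ((σ i) k)
        = (∑ k, a k • (w i ((σ i) k) - uMu (w i))) + ((n : ℝ) / 2) • uMu (w i) := by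
      rw [← hSa, Finset.sum_smul, ← Finset.sum_add_distrib]
      refine Finset.sum_congr rfl fun k _ => ?_
      rw [smul_sub]
      abel
    rw [hsplit, hμw i, smul_smul]
    have hsc : (n : ℝ) / 2 * (n : ℝ)⁻¹ = (2 : ℝ)⁻¹ := by field_simp
    rw [hsc]
    module
  -- main computation
  have hcoef : (∑ k, a k ^ 2) - ((∑ k, a k) ^ 2 - ∑ k, a k ^ 2) / ((n : ℝ) - 1)
      = (n : ℝ) ^ 2 * ((n : ℝ) + 1) / (12 * ((n : ℝ) - 1) ^ 2) := by
    rw [hSa, hSa2]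
    field_simp
    ring
  have huRg : ∀ i : Fin e', (n : ℝ)⁻¹ * ∑ m, ‖w i m - uMu (w i)‖ ^ 2 = uRg2 (w i) := by
    intro i
    unfold uRg2
    rw [Fintype.card_fin]
  calc (Fintype.card (Fin e' → Equiv.Perm (Fin n)) : ℝ)⁻¹ *
        ∑ σ : Fin e' → Equiv.Perm (Fin n), ∑ i : Fin e',
          ‖uMu (fun j : Fin (n - 1) => xpos X' tl w σ i j) - uMu X'‖ ^ 2
      = ∑ i : Fin e', (Fintype.card (Fin e' → Equiv.Perm (Fin n)) : ℝ)⁻¹ *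
          ∑ σ : Fin e' → Equiv.Perm (Fin n),
            ‖((2 : ℝ)⁻¹ • (X' (head i) + X' (tl i)) - uMu X')
              + ∑ k, a k • (w i ((σ i) k) - uMu (w i))‖ ^ 2 := by
        rw [Finset.sum_congr rfl fun σ _ => Finset.sum_congr rfl fun i _ => by
          rw [hmean σ i], Finset.sum_comm, Finset.mul_sum]
    _ = ∑ i : Fin e', (Fintype.card (Equiv.Perm (Fin n)) : ℝ)⁻¹ *
          ∑ π : Equiv.Perm (Fin n),
            ‖((2 : ℝ)⁻¹ • (X' (head i) + X' (tl i)) - uMu X')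
              + ∑ k, a k • (w i (π k) - uMu (w i))‖ ^ 2 := by
        refine Finset.sum_congr rfl fun i _ => ?_
        exact avg_pi_eval i (fun π : Equiv.Perm (Fin n) =>
          ‖((2 : ℝ)⁻¹ • (X' (head i) + X' (tl i)) - uMu X')
            + ∑ k, a k • (w i (π k) - uMu (w i))‖ ^ 2)
    _ = ∑ i : Fin e', (‖(2 : ℝ)⁻¹ • (X' (head i) + X' (tl i)) - uMu X'‖ ^ 2
          + ((n : ℝ) ^ 2 * ((n : ℝ) + 1) / (12 * ((n : ℝ) - 1) ^ 2)) * uRg2 (w i)) := by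
        refine Finset.sum_congr rfl fun i _ => ?_
        rw [perm_avg hn (fun k => w i k - uMu (w i)) (hu0 i)
          ((2 : ℝ)⁻¹ • (X' (head i) + X' (tl i)) - uMu X') a, hcoef, huRg i]
    _ = (∑ i : Fin e', ‖(2 : ℝ)⁻¹ • (X' (head i) + X' (tl i)) - uMu X'‖ ^ 2)
          + ((n : ℝ) ^ 2 * ((n : ℝ) + 1) / (12 * ((n : ℝ) - 1) ^ 2)) *
            ∑ i : Fin e', uRg2 (w i) := by
        rw [Finset.sum_add_distrib, Finset.mul_sum]
    _ = (e' : ℝ) *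
          (uRg2 (fun i : Fin e' => (2 : ℝ)⁻¹ • (X' (head i) + X' (tl i)))
            + ‖com X' (fun k =>
                  (((univ.filter fun i => head i = k).card : ℝ)
                    + ((univ.filter fun i => tl i = k).card : ℝ))) - uMu X'‖ ^ 2)
        + ((n : ℝ) ^ 2 * ((n : ℝ) + 1) / (12 * ((n : ℝ) - 1) ^ 2)) *
            ∑ i : Fin e', uRg2 (w i) := by
        rw [var_decomp he' (fun i : Fin e' => (2 : ℝ)⁻¹ • (X' (head i) + X' (tl i))) (uMu X'),
          com_deg_eq he' head tl X']
        ring
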